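/- Let $d_H$ be an $H$-metric on $\chi$ with parameter $\gamma$, and define $d(p_1,p_2) := d_H(p_1,p_2,\ldots,p_2) + d_H(p_2,p_1,\ldots,p_1)$. Then for all $p_1,\ldots,p_k \in \chi$ and any $v \in \{p_1,\ldots,p_k\}$: $d_H(p_1,\ldots,p_k) \le \sum_{i=1}^{k} d(v, p_i)$. -/

import Mathlib

structure IsHMetric {χ : Type*} (k : ℕ) (γ : ℝ) (dH : (Fin k → χ) → ℝ) : Prop where
  perm : ∀ (π : Equiv.Perm (Fin k)) (p : Fin k → χ), dH (p ∘ π) = dH p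
  nonneg : ∀ p, 0 ≤ dH p
  eq_zero_iff : ∀ p, dH p = 0 ↔ ∀ i j, p i = p j
  triangle : ∀ (p : Fin k → χ) (a : χ) (i : ℕ), 1 ≤ i → i ≤ k →
      dH p ≤ dH (fun j => if (j : ℕ) < i then p j else a)
            + dH (fun j => if (j : ℕ) < i then a else p j)
  sep_ssubset : ∀ p q : Fin k → χ, Set.range p ⊂ Set.range q → dH p ≤ dH q
  sep_eq : ∀ p q : Fin k → χ, Set.range p = Set.range q → dH p ≤ γ * dH q

/-- The induced two-point metric `d(p,q) = d_H(p,q,…,q) + d_H(q,p,…,p)`. -/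
def pairDist {χ : Type*} (k : ℕ) (dH : (Fin k → χ) → ℝ) (p q : χ) : ℝ :=
  dH (fun i => if (i : ℕ) = 0 then p else q) + dH (fun i => if (i : ℕ) = 0 then q else p)

theorem stmt1 {χ : Type*} (k : ℕ) (γ : ℝ) (dH : (Fin k → χ) → ℝ)
    (hk : 2 ≤ k) (hγ0 : 0 ≤ γ) (hγ : γ ≤ (k : ℝ) - 1)
    (h : IsHMetric k γ dH) (p : Fin k → χ) (v : χ) (hv : v ∈ Set.range p) :
    dH p ≤ ∑ i : Fin k, pairDist k dH v (p i) := by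
  have hk0 : 0 < k := by omega
  -- main induction
  have main : ∀ m : ℕ, m ≤ k →
      dH p ≤ (∑ i ∈ Finset.univ.filter (fun i : Fin k => (i : ℕ) < m),
        pairDist k dH v (p i)) + dH (fun j : Fin k => if (j : ℕ) < m then v else p j) := by
    intro m
    induction m with
    | zero =>
      intro _
      have h1 : (Finset.univ.filter (fun i : Fin k => (i : ℕ) < 0)) = ∅ := by
        ext i; simp
      have h2 : (fun j : Fin k => if (j : ℕ) < 0 then v else p j) = p := by
        funext j; simp
      rw [h1, h2]; simp
    | succ m ih =>
      intro hm1
      have hmk : m < k := by omega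
      have key : dH (fun j : Fin k => if (j : ℕ) < m then v else p j)
          ≤ dH (fun i : Fin k => if (i : ℕ) = 0 then p ⟨m, hmk⟩ else v)
            + dH (fun j : Fin k => if (j : ℕ) < m + 1 then v else p j) := by
        set q : Fin k → χ := fun j : Fin k => if (j : ℕ) < m then v else p j with hq
        set σ := Equiv.swap (⟨0, hk0⟩ : Fin k) ⟨m, hmk⟩ with hσ
        have hperm : dH q = dH (q ∘ σ) := (h.perm σ q).symm
        have htri := h.triangle (q ∘ σ) v 1 (le_refl 1) (by omega)
        have e1 : (fun j : Fin k => if (j : ℕ) < 1 then (q ∘ σ) j else v)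
            = (fun i : Fin k => if (i : ℕ) = 0 then p ⟨m, hmk⟩ else v) := by
          funext j
          by_cases hj : (j : ℕ) = 0
          · have hj' : j = ⟨0, hk0⟩ := by exact Fin.ext hj
            simp only [hj, hj', Nat.lt_one_iff, if_true, Function.comp]
            rw [hσ, Equiv.swap_apply_left]
            simp [hq]
          · simp [hj, Nat.lt_one_iff]
        have e2 : (fun j : Fin k => if (j : ℕ) < 1 then v else (q ∘ σ) j)
            = (fun j : Fin k => if (j : ℕ) < m + 1 then v else p j) := by
          funext j
          by_cases hj : (j : ℕ) = 0
          · simp [hj, Nat.lt_one_iff]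
          · have hj1 : ¬ (j : ℕ) < 1 := by omega
            simp only [hj1, if_false, Function.comp]
            by_cases hjm : j = (⟨m, hmk⟩ : Fin k)
            · have hm0 : 1 ≤ m := by
                have := hjm ▸ hj
                simp at this
                omega
              rw [hjm]
              show (if ((σ ⟨m, hmk⟩ : Fin k) : ℕ) < m then v else p _) = _
              rw [hσ, Equiv.swap_apply_right]
              have h1 : ((⟨0, hk0⟩ : Fin k) : ℕ) < m := by exact hm0
              have h2 : ((⟨m, hmk⟩ : Fin k) : ℕ) < m + 1 := by simp
              simp [h1, h2]
            · have hj0 : j ≠ (⟨0, hk0⟩ : Fin k) := by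
                intro hc; exact hj (by rw [hc])
              rw [Equiv.swap_apply_of_ne_of_ne hj0 hjm]
              have hjm' : (j : ℕ) ≠ m := fun hc => hjm (Fin.ext hc)
              have : ((j : ℕ) < m) ↔ ((j : ℕ) < m + 1) := by omega
              simp [hq, this]
        rw [hperm]
        calc dH (q ∘ σ) ≤ _ := htri
          _ = _ := by rw [e1, e2]
      have hpd : dH (fun i : Fin k => if (i : ℕ) = 0 then p ⟨m, hmk⟩ else v)
          ≤ pairDist k dH v (p ⟨m, hmk⟩) := by
        unfold pairDist
        have := h.nonneg (fun i : Fin k => if (i : ℕ) = 0 then v else p ⟨m, hmk⟩)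
        linarith
      have hfilter : (Finset.univ.filter (fun i : Fin k => (i : ℕ) < m + 1))
          = insert (⟨m, hmk⟩ : Fin k) (Finset.univ.filter (fun i : Fin k => (i : ℕ) < m)) := by
        ext i
        simp only [Finset.mem_filter, Finset.mem_insert, Finset.mem_univ, true_and]
        constructor
        · intro hi
          rcases Nat.lt_succ_iff_lt_or_eq.mp hi with h1 | h1
          · exact Or.inr h1
          · exact Or.inl (Fin.ext h1)
        · rintro (rfl | hi)
          · simp
          · omega
      have hnotmem : (⟨m, hmk⟩ : Fin k) ∉ Finset.univ.filter (fun i : Fin k => (i : ℕ) < m) := by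
        simp
      rw [hfilter, Finset.sum_insert hnotmem]
      have := ih (by omega)
      linarith
  have hfin := main k (le_refl k)
  have hfull : (Finset.univ.filter (fun i : Fin k => (i : ℕ) < k)) = Finset.univ := by
    ext i; simpa using i.isLt
  have hzero : dH (fun j : Fin k => if (j : ℕ) < k then v else p j) = 0 := by
    rw [h.eq_zero_iff]
    intro i j
    simp [i.isLt, j.isLt]
  rw [hfull, hzero] at hfin
  simpa using hfin
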